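/- Fix r > 0 and define G : (0,∞) → ℝ by G(a) = (1/(2r)) ∫_{−∞}^{a} exp(−(u² + 1)/(4r)) du + (1/(2r)) ∫_0^1 exp(−(a² + 2ax + 1)/(4r)) dx. Then there exists a₀ > 0 such that for every a ≥ a₀, G(a) > √(π/r)·e^{−1/(4r)}; i.e., the Gaussian F-functional of the capped half-cylinder centered at an axis point strictly exceeds the corresponding F-functional value of the full round cylinder. -/

import Mathlib

open MeasureTheory Set Real Filter

lemma tail_bound' {b c : ℝ} (hb : 0 < b) (hc : 0 < c) :
    ∫ u in Set.Ioi c, Real.exp (-b * u ^ 2) ≤ (1 / (2 * b * c)) * Real.exp (-b * c ^ 2) := by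
  have hderiv : ∀ u ∈ Set.Ici c, HasDerivAt (fun u : ℝ => -(1 / (2 * b)) * Real.exp (-b * u ^ 2))
      (u * Real.exp (-b * u ^ 2)) u := by
    intro u _
    have h1 : HasDerivAt (fun u : ℝ => -b * u ^ 2) (-b * (2 * u ^ 1)) u :=
      (hasDerivAt_pow 2 u).const_mul (-b)
    have h2 := (h1.exp).const_mul (-(1 / (2 * b)))
    refine h2.congr_deriv ?_
    rw [show -(1 / (2 * b)) * (Real.exp (-b * u ^ 2) * (-b * (2 * u ^ 1))) = (b * b⁻¹) * (u * Real.exp (-b * u ^ 2)) by ring, mul_inv_cancel₀ hb.ne', one_mul]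
  have hint : IntegrableOn (fun u : ℝ => u * Real.exp (-b * u ^ 2)) (Set.Ioi c) :=
    (integrable_mul_exp_neg_mul_sq hb).integrableOn
  have htend : Tendsto (fun u : ℝ => -(1 / (2 * b)) * Real.exp (-b * u ^ 2)) atTop (nhds 0) := by
    have h3 : Tendsto (fun u : ℝ => -b * u ^ 2) atTop atBot := by
      exact (tendsto_pow_atTop (two_ne_zero)).const_mul_atTop_of_neg (by linarith)
    have h4 := Real.tendsto_exp_atBot.comp h3
    have := h4.const_mul (-(1 / (2 * b)))
    simpa using this
  have heq : ∫ u in Set.Ioi c, u * Real.exp (-b * u ^ 2)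
      = (1 / (2 * b)) * Real.exp (-b * c ^ 2) := by
    rw [integral_Ioi_of_hasDerivAt_of_tendsto' hderiv hint htend]
    ring
  have hmono : ∫ u in Set.Ioi c, Real.exp (-b * u ^ 2)
      ≤ ∫ u in Set.Ioi c, (1 / c) * (u * Real.exp (-b * u ^ 2)) := by
    apply setIntegral_mono_on (integrable_exp_neg_mul_sq hb).integrableOn
      (hint.const_mul (1 / c)) measurableSet_Ioi
    intro u hu
    have hu' : c < u := hu
    have h5 : (1:ℝ) ≤ u / c := (one_le_div hc).mpr hu'.le
    have h6 : (0:ℝ) < Real.exp (-b * u ^ 2) := Real.exp_pos _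
    calc Real.exp (-b * u ^ 2) = 1 * Real.exp (-b * u ^ 2) := by ring
      _ ≤ (u / c) * Real.exp (-b * u ^ 2) := by nlinarith
      _ = (1 / c) * (u * Real.exp (-b * u ^ 2)) := by ring
  rw [MeasureTheory.integral_const_mul, heq] at hmono
  calc ∫ u in Set.Ioi c, Real.exp (-b * u ^ 2) ≤ 1 / c * (1 / (2 * b) * Real.exp (-b * c ^ 2)) := hmono
    _ = (1 / (2 * b * c)) * Real.exp (-b * c ^ 2) := by field_simp

/-- The F-functional of the capped half-cylinder at scale r, centered at the axis point at
distance a inside the cylinder from the cap center, as a one-dimensional integral. -/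
noncomputable def G (r a : ℝ) : ℝ :=
  (1 / (2 * r)) * (∫ u in Set.Iic a, Real.exp (-(u ^ 2 + 1) / (4 * r))) +
  (1 / (2 * r)) * ∫ x in (0:ℝ)..1, Real.exp (-(a ^ 2 + 2 * a * x + 1) / (4 * r))

/-- For all sufficiently large a, the F-functional G(a) of the capped half-cylinder strictly
exceeds the corresponding F-functional value √(π/r)·e^{−1/(4r)} of the full round cylinder. -/
theorem stmt_16 (r : ℝ) (hr : 0 < r) :
    ∃ a₀ > (0:ℝ), ∀ a ≥ a₀,
      G r a > Real.sqrt (Real.pi / r) * Real.exp (-1 / (4 * r)) := by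
  have h4r : (0:ℝ) < 4 * r := by linarith
  obtain ⟨b, hbdef⟩ : ∃ b : ℝ, b = (4 * r)⁻¹ := ⟨_, rfl⟩
  have hb : 0 < b := hbdef ▸ inv_pos.mpr h4r
  have hfeq : ∀ u : ℝ, Real.exp (-(u ^ 2 + 1) / (4 * r))
      = Real.exp (-b * u ^ 2) * Real.exp (-b) := by
    intro u
    rw [← Real.exp_add]
    congr 1
    rw [hbdef, div_eq_mul_inv]
    ring
  have hint : Integrable (fun u : ℝ => Real.exp (-(u ^ 2 + 1) / (4 * r))) := by
    simp only [hfeq]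
    exact (integrable_exp_neg_mul_sq hb).mul_const _
  have htot : Real.sqrt (Real.pi / r) * Real.exp (-1 / (4 * r))
      = (1 / (2 * r)) * ∫ u : ℝ, Real.exp (-(u ^ 2 + 1) / (4 * r)) := by
    have h1 : ∫ u : ℝ, Real.exp (-(u ^ 2 + 1) / (4 * r))
        = Real.sqrt (Real.pi / b) * Real.exp (-b) := by
      simp only [hfeq]
      rw [MeasureTheory.integral_mul_const, integral_gaussian]
    have hsq : Real.sqrt (Real.pi / b) = 2 * r * Real.sqrt (Real.pi / r) := by
      rw [show Real.pi / b = (2*r)^2 * (Real.pi / r) by rw [hbdef]; field_simp; ring,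
        Real.sqrt_mul (by positivity), Real.sqrt_sq (by linarith)]
    have hexp : Real.exp (-b) = Real.exp (-1 / (4*r)) := by
      congr 1; rw [hbdef, neg_div, one_div]
    rw [h1, hsq, hexp]
    field_simp
  set C : ℝ := ∫ x in (0:ℝ)..1, (1 - Real.exp (-b * x ^ 2)) with hCdef
  have hCcont : Continuous fun x : ℝ => 1 - Real.exp (-b * x ^ 2) := by fun_prop
  have hCpos : 0 < C := by
    apply intervalIntegral.intervalIntegral_pos_of_pos_on (hCcont.intervalIntegrable 0 1)
    · intro x hx
      have hx0 := hx.1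
      have : Real.exp (-b * x ^ 2) < 1 := by
        rw [← Real.exp_zero]
        exact Real.exp_lt_exp.mpr (by nlinarith [mul_pos hb (pow_pos hx0 2)])
      linarith
    · norm_num
  refine ⟨max 1 (2 * r / C), lt_of_lt_of_le zero_lt_one (le_max_left _ _), ?_⟩
  intro a ha
  have ha1 : (1:ℝ) ≤ a := le_trans (le_max_left _ _) ha
  have ha0 : 0 < a := by linarith
  have ha2 : 2 * r / C ≤ a := le_trans (le_max_right _ _) ha
  -- split the tail integral
  have hsplit : ∫ u in Set.Ioi a, Real.exp (-(u ^ 2 + 1) / (4 * r))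
      = (∫ u in Set.Ioc a (a+1), Real.exp (-(u ^ 2 + 1) / (4 * r)))
      + ∫ u in Set.Ioi (a+1), Real.exp (-(u ^ 2 + 1) / (4 * r)) := by
    rw [← Set.Ioc_union_Ioi_eq_Ioi (by linarith : a ≤ a + 1)]
    exact MeasureTheory.setIntegral_union (Set.Ioc_disjoint_Ioi le_rfl)
      measurableSet_Ioi hint.integrableOn hint.integrableOn
  -- middle piece as an interval integral via translation
  have hmid : ∫ u in Set.Ioc a (a+1), Real.exp (-(u ^ 2 + 1) / (4 * r))
      = ∫ x in (0:ℝ)..1, Real.exp (-((x + a) ^ 2 + 1) / (4 * r)) := by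
    rw [intervalIntegral.integral_comp_add_right
        (fun u => Real.exp (-(u ^ 2 + 1) / (4 * r))) a, zero_add, add_comm 1 a,
      intervalIntegral.integral_of_le (by linarith : a ≤ a + 1)]
  -- pointwise bound on [0,1]
  have hq : ∀ x ∈ Set.Icc (0:ℝ) 1,
      Real.exp (-((x + a) ^ 2 + 1) / (4 * r))
        + Real.exp (-(a ^ 2 + 2 * a + 1) / (4 * r)) * (1 - Real.exp (-b * x ^ 2))
      ≤ Real.exp (-(a ^ 2 + 2 * a * x + 1) / (4 * r)) := by
    intro x hx
    have key : Real.exp (-((x + a) ^ 2 + 1) / (4 * r))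
        = Real.exp (-(a ^ 2 + 2 * a * x + 1) / (4 * r)) * Real.exp (-b * x ^ 2) := by
      rw [← Real.exp_add]; congr 1; rw [hbdef]; simp only [div_eq_mul_inv]; ring
    have h1 : Real.exp (-(a ^ 2 + 2 * a + 1) / (4 * r))
        ≤ Real.exp (-(a ^ 2 + 2 * a * x + 1) / (4 * r)) := by
      apply Real.exp_le_exp.mpr
      rw [div_le_div_iff₀ h4r h4r]
      nlinarith [hx.1, hx.2, mul_nonneg (mul_nonneg ha0.le (sub_nonneg.mpr hx.2)) h4r.le]
    have h2 : 0 ≤ 1 - Real.exp (-b * x ^ 2) := by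
      have : Real.exp (-b * x ^ 2) ≤ 1 := by
        rw [← Real.exp_zero]
        exact Real.exp_le_exp.mpr (by nlinarith [mul_nonneg hb.le (sq_nonneg x)])
      linarith
    nlinarith [mul_le_mul_of_nonneg_right h1 h2, key]
  have hcontmid : Continuous fun x : ℝ => Real.exp (-((x + a) ^ 2 + 1) / (4 * r)) := by fun_prop
  have hcontcap : Continuous fun x : ℝ =>
      Real.exp (-(a ^ 2 + 2 * a * x + 1) / (4 * r)) := by fun_prop
  have hImono : (∫ x in (0:ℝ)..1, (Real.exp (-((x + a) ^ 2 + 1) / (4 * r))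
        + Real.exp (-(a ^ 2 + 2 * a + 1) / (4 * r)) * (1 - Real.exp (-b * x ^ 2))))
      ≤ ∫ x in (0:ℝ)..1, Real.exp (-(a ^ 2 + 2 * a * x + 1) / (4 * r)) :=
    intervalIntegral.integral_mono_on (by norm_num)
      ((hcontmid.add (continuous_const.mul hCcont)).intervalIntegrable 0 1)
      (hcontcap.intervalIntegrable 0 1) hq
  rw [intervalIntegral.integral_add (g := fun x : ℝ => Real.exp (-(a ^ 2 + 2 * a + 1) / (4 * r)) * (1 - Real.exp (-b * x ^ 2))) (hcontmid.intervalIntegrable 0 1)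
      ((continuous_const.mul hCcont).intervalIntegrable 0 1),
    intervalIntegral.integral_const_mul] at hImono
  -- tail bound
  have htail : ∫ u in Set.Ioi (a+1), Real.exp (-(u ^ 2 + 1) / (4 * r))
      ≤ (2 * r / (a + 1)) * Real.exp (-((a+1) ^ 2 + 1) / (4 * r)) := by
    have e1 : ∫ u in Set.Ioi (a+1), Real.exp (-(u ^ 2 + 1) / (4 * r))
        = (∫ u in Set.Ioi (a+1), Real.exp (-b * u ^ 2)) * Real.exp (-b) := by
      simp only [hfeq]; rw [MeasureTheory.integral_mul_const]
    rw [e1, hfeq (a+1)]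
    have e2 : (2 * r / (a + 1)) = 1 / (2 * b * (a+1)) := by
      rw [hbdef]; field_simp; ring
    rw [e2, ← mul_assoc]
    exact mul_le_mul_of_nonneg_right (tail_bound' hb (by linarith)) (Real.exp_pos _).le
  -- the tail is strictly smaller than the gain
  have hCa : 2 * r < C * (a + 1) := by
    have h3 : 2 * r ≤ C * a := by
      rw [div_le_iff₀ hCpos] at ha2; linarith
    nlinarith
  have hfinal : (2 * r / (a + 1)) * Real.exp (-((a+1) ^ 2 + 1) / (4 * r))
      < Real.exp (-(a ^ 2 + 2 * a + 1) / (4 * r)) * C := by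
    have he : Real.exp (-((a+1) ^ 2 + 1) / (4 * r))
        ≤ Real.exp (-(a ^ 2 + 2*a + 1) / (4 * r)) := by
      apply Real.exp_le_exp.mpr
      rw [div_le_div_iff₀ h4r h4r]
      nlinarith
    have hp : 0 < Real.exp (-(a ^ 2 + 2 * a + 1) / (4 * r)) := Real.exp_pos _
    have h2ra : (0:ℝ) ≤ 2 * r / (a + 1) := by positivity
    calc (2 * r / (a + 1)) * Real.exp (-((a+1) ^ 2 + 1) / (4 * r))
        ≤ (2 * r / (a + 1)) * Real.exp (-(a ^ 2 + 2 * a + 1) / (4 * r)) :=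
          mul_le_mul_of_nonneg_left he h2ra
      _ < C * Real.exp (-(a ^ 2 + 2 * a + 1) / (4 * r)) := by
          apply mul_lt_mul_of_pos_right _ hp
          rw [div_lt_iff₀ (by linarith : (0:ℝ) < a + 1)]
          linarith
      _ = Real.exp (-(a ^ 2 + 2 * a + 1) / (4 * r)) * C := mul_comm _ _
  -- strict inequality between the tail and the cap integral
  have hlt : ∫ u in Set.Ioi a, Real.exp (-(u ^ 2 + 1) / (4 * r))
      < ∫ x in (0:ℝ)..1, Real.exp (-(a ^ 2 + 2 * a * x + 1) / (4 * r)) := by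
    rw [hsplit, hmid]
    linarith
  -- conclude
  have hdecomp : (∫ u : ℝ, Real.exp (-(u ^ 2 + 1) / (4 * r)))
      = (∫ u in Set.Iic a, Real.exp (-(u ^ 2 + 1) / (4 * r)))
      + ∫ u in Set.Ioi a, Real.exp (-(u ^ 2 + 1) / (4 * r)) :=
    (intervalIntegral.integral_Iic_add_Ioi hint.integrableOn hint.integrableOn).symm
  rw [htot, hdecomp, mul_add]
  unfold G
  have h2r : (0:ℝ) < 1 / (2 * r) := by positivity
  exact add_lt_add_right (mul_lt_mul_of_pos_left hlt h2r) _
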